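/- Let p be a prime, G = Z_p ≀ Z_p = J ⋉ V as above, u⁻¹ = (j^d, t) ∈ G, and g a nonidentity element of the center Z of G (so Z ⊆ V is spanned by the all-ones vector). If k·t ≠ 0 then G_p(u, g) = ∅; if k·t = 0, then |G_p(u, g)| = (p-1)·p^{p-1} when d ≡ 0 (mod p), and |G_p(u, g)| = (p-2)·p^{p-1} otherwise. In particular |G_p(u, g)| is independent of the choice of nonidentity g ∈ Z. -/

import Mathlib

/-- The wreath product `Z_p ≀ Z_p = J ⋉ V` with `V = (ZMod p)^p` (indexed by `ZMod p`)
and `J = ⟨j⟩ ≅ Z_p` acting by cyclically permuting the coordinates.  An element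
`(r, x)` represents `(j^r, x)`, and multiplication is
`(j^r, x)(j^s, y) = (j^(r+s), j^s·x + y)` where `(j^s·x) i = x (i + s)`. -/
def Wr (p : ℕ) : Type := ZMod p × (ZMod p → ZMod p)

instance (p : ℕ) : Group (Wr p) where
  mul a b := ⟨a.1 + b.1, fun i => a.2 (i + b.1) + b.2 i⟩
  one := ⟨0, fun _ => 0⟩
  inv a := ⟨-a.1, fun i => -a.2 (i - a.1)⟩
  mul_assoc a b c := by
    refine Prod.ext ?_ (funext fun i => ?_)
    · exact add_assoc _ _ _
    · show a.2 (i + c.1 + b.1) + b.2 (i + c.1) + c.2 i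
        = a.2 (i + (b.1 + c.1)) + (b.2 (i + c.1) + c.2 i)
      rw [add_assoc, add_assoc, add_comm c.1 b.1]
  one_mul a := by
    refine Prod.ext (zero_add _) (funext fun i => ?_)
    show (0 : ZMod p) + a.2 i = a.2 i
    exact zero_add _
  mul_one a := by
    refine Prod.ext (add_zero _) (funext fun i => ?_)
    show a.2 (i + 0) + 0 = a.2 i
    rw [add_zero, add_zero]
  inv_mul_cancel a := by
    refine Prod.ext (neg_add_cancel _) (funext fun i => ?_)
    show -a.2 (i + a.1 - a.1) + a.2 i = 0
    rw [add_sub_cancel_right, neg_add_cancel]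


/-- in `G = Z_p ≀ Z_p`, for `u⁻¹ = (j^d, t)` and a nonidentity central
element `g = (1, c·𝟏)` (with `c ≠ 0`), the set `G_p(u, g)` is empty if `k·t ≠ 0`
(i.e. `∑ t ≠ 0`); and if `k·t = 0` it has cardinality `(p-1)·p^(p-1)` when
`d ≡ 0 (mod p)` and `(p-2)·p^(p-1)` otherwise.  In particular `|G_p(u, g)|` does
not depend on the choice of the nonidentity central element `g`. -/
lemma wr_mul {p : ℕ} (a b : Wr p) :
    a * b = ((a.1 + b.1, fun i => a.2 (i + b.1) + b.2 i) : Wr p) := rfl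

lemma wr_one {p : ℕ} : (1 : Wr p) = ((0, fun _ => 0) : Wr p) := rfl

lemma wr_pow {p : ℕ} (a : Wr p) (n : ℕ) :
    a ^ n = (((n : ZMod p) * a.1,
      fun i => ∑ m ∈ Finset.range n, a.2 (i + (m : ZMod p) * a.1)) : Wr p) := by
  induction n with
  | zero =>
    rw [pow_zero, wr_one]
    refine Prod.ext ?_ (funext fun i => ?_) <;> simp
  | succ n ih =>
    rw [pow_succ, ih]
    refine Prod.ext ?_ (funext fun i => ?_)
    · show (n : ZMod p) * a.1 + a.1 = ((n + 1 : ℕ) : ZMod p) * a.1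
      push_cast; ring
    · show (∑ m ∈ Finset.range n, a.2 (i + a.1 + (m : ZMod p) * a.1)) + a.2 i
        = ∑ m ∈ Finset.range (n + 1), a.2 (i + (m : ZMod p) * a.1)
      rw [Finset.sum_range_succ']
      refine congrArg₂ (· + ·) (Finset.sum_congr rfl fun m _ => ?_) ?_
      · exact congrArg a.2 (by push_cast; ring)
      · exact congrArg a.2 (by simp)

lemma wr_pow_p_of_eq {p : ℕ} (a : Wr p) (h : a.1 = 0) : a ^ p = 1 := by
  rw [wr_pow, wr_one]
  refine Prod.ext ?_ (funext fun i => ?_)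
  · show (p : ZMod p) * a.1 = 0
    simp [ZMod.natCast_self]
  · show (∑ m ∈ Finset.range p, a.2 (i + (m : ZMod p) * a.1)) = 0
    simp [h, Finset.sum_const, nsmul_eq_mul, ZMod.natCast_self]

lemma wr_pow_p_of_ne {p : ℕ} (hp : p.Prime) [NeZero p] (a : Wr p) (h : a.1 ≠ 0) :
    a ^ p = ((0, fun _ => ∑ w, a.2 w) : Wr p) := by
  haveI : Fact p.Prime := ⟨hp⟩
  rw [wr_pow]
  refine Prod.ext ?_ (funext fun i => ?_)
  · show (p : ZMod p) * a.1 = 0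
    simp [ZMod.natCast_self]
  · show (∑ m ∈ Finset.range p, a.2 (i + (m : ZMod p) * a.1)) = ∑ w, a.2 w
    have h1 : (∑ m ∈ Finset.range p, a.2 (i + (m : ZMod p) * a.1))
        = ∑ v : ZMod p, a.2 (i + v * a.1) := by
      refine Finset.sum_bij' (fun m _ => (m : ZMod p)) (fun v _ => v.val)
        (fun _ _ => Finset.mem_univ _)
        (fun v _ => Finset.mem_range.2 (ZMod.val_lt v))
        (fun m hm => ZMod.val_cast_of_lt (Finset.mem_range.1 hm))
        (fun v _ => ZMod.natCast_rightInverse v)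
        (fun m _ => rfl)
    rw [h1]
    exact Fintype.sum_equiv ((Equiv.mulRight₀ a.1 h).trans (Equiv.addLeft i))
      _ _ (fun v => rfl)

lemma wr_pow_p_eq_iff {p : ℕ} (hp : p.Prime) [NeZero p] {c : ZMod p} (hc : c ≠ 0) (a : Wr p) :
    a ^ p = ((0, fun _ => c) : Wr p) ↔ a.1 ≠ 0 ∧ ∑ w, a.2 w = c := by
  constructor
  · intro h
    by_cases h1 : a.1 = 0
    · rw [wr_pow_p_of_eq a h1, wr_one] at h
      exact absurd (congrFun (congrArg Prod.snd h) 0).symm hc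
    · rw [wr_pow_p_of_ne hp a h1] at h
      exact ⟨h1, congrFun (congrArg Prod.snd h) 0⟩
  · rintro ⟨h1, h2⟩
    rw [wr_pow_p_of_ne hp a h1]
    exact Prod.ext rfl (funext fun _ => h2)

lemma wr_mul_snd_sum {p : ℕ} [NeZero p] (a b : Wr p) :
    ∑ w, (a * b).2 w = (∑ w, a.2 w) + ∑ x, b.2 x := by
  show ∑ w, (a.2 (w + b.1) + b.2 w) = _
  rw [Finset.sum_add_distrib]
  congr 1
  exact Fintype.sum_equiv (Equiv.addRight b.1) _ _ (fun w => rfl)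

lemma wr_mem_iff {p : ℕ} (hp : p.Prime) [NeZero p]
    {c : ZMod p} (hc : c ≠ 0) (a b : Wr p) (ht : ∑ x, b.2 x = 0) :
    ((a * b) ^ p = a ^ p ∧ a ^ p = ((0, fun _ => c) : Wr p)) ↔
      (a.1 ≠ 0 ∧ a.1 + b.1 ≠ 0 ∧ ∑ w, a.2 w = c) := by
  constructor
  · rintro ⟨h1, h2⟩
    obtain ⟨ha1, ha2⟩ := (wr_pow_p_eq_iff hp hc a).1 h2
    have hb := (wr_pow_p_eq_iff hp hc _).1 (h1.trans h2)
    exact ⟨ha1, hb.1, ha2⟩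
  · rintro ⟨h1, h2, h3⟩
    have ha : a ^ p = ((0, fun _ => c) : Wr p) := (wr_pow_p_eq_iff hp hc a).2 ⟨h1, h3⟩
    refine ⟨?_, ha⟩
    rw [ha]
    refine (wr_pow_p_eq_iff hp hc _).2 ⟨h2, ?_⟩
    rw [wr_mul_snd_sum, h3, ht, add_zero]

lemma wr_not_mem {p : ℕ} (hp : p.Prime) [NeZero p]
    {c : ZMod p} (hc : c ≠ 0) (a b : Wr p) (ht : ∑ x, b.2 x ≠ 0) :
    ¬ ((a * b) ^ p = a ^ p ∧ a ^ p = ((0, fun _ => c) : Wr p)) := by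
  rintro ⟨h1, h2⟩
  obtain ⟨ha1, ha2⟩ := (wr_pow_p_eq_iff hp hc a).1 h2
  have hb := (wr_pow_p_eq_iff hp hc _).1 (h1.trans h2)
  rw [wr_mul_snd_sum, ha2] at hb
  apply ht
  linear_combination hb.2

lemma card_ne_zero_sub {p : ℕ} [NeZero p] : Fintype.card {i : ZMod p // i ≠ 0} = p - 1 := by
  rw [Fintype.card_subtype, Finset.filter_ne' Finset.univ (0 : ZMod p),
    Finset.card_erase_of_mem (Finset.mem_univ _), Finset.card_univ, ZMod.card]

lemma sum_decomp {p : ℕ} [NeZero p] (f : ZMod p → ZMod p) :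
    ∑ i, f i = f 0 + ∑ j : {i : ZMod p // i ≠ 0}, f j.1 := by
  rw [Fintype.sum_eq_add_sum_compl 0 f]
  congr 1
  exact Finset.sum_subtype _ (by simp) f

lemma card_fiber {p : ℕ} [NeZero p] (c : ZMod p) :
    Nat.card {x : ZMod p → ZMod p // ∑ i, x i = c} = p ^ (p - 1) := by
  have e2 : {x : ZMod p → ZMod p // ∑ i, x i = c} ≃ ({i : ZMod p // i ≠ 0} → ZMod p) :=
    { toFun := fun x j => x.1 j.1
      invFun := fun y => ⟨fun i => if h : i = 0 then c - ∑ j, y j else y ⟨i, h⟩, by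
        rw [sum_decomp, dif_pos rfl,
          Finset.sum_congr rfl (fun (j : {i : ZMod p // i ≠ 0}) _ =>
            (dif_neg j.2 : (if h : j.1 = 0 then c - ∑ j, y j else y ⟨j.1, h⟩) = y j))]
        ring⟩
      left_inv := by
        rintro ⟨x, hx⟩
        refine Subtype.ext (funext fun i => ?_)
        show (if h : i = 0 then c - ∑ j : {i : ZMod p // i ≠ 0}, x j.1 else x i) = x i
        by_cases h : i = 0
        · subst h
          rw [dif_pos rfl]
          rw [sum_decomp x] at hx
          linear_combination -hx
        · exact dif_neg h
      right_inv := by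
        intro y
        funext j
        show (if h : j.1 = 0 then c - _ else y ⟨j.1, h⟩) = y j
        rw [dif_neg j.2] }
  rw [Nat.card_congr e2, Nat.card_eq_fintype_card, Fintype.card_fun, ZMod.card,
    card_ne_zero_sub]

lemma card_r0 {p : ℕ} [NeZero p] :
    Nat.card {r : ZMod p // r ≠ 0 ∧ r + 0 ≠ 0} = p - 1 := by
  rw [Nat.card_congr (Equiv.subtypeEquivRight (q := fun r : ZMod p => r ≠ 0)
    (fun r => by simp)), Nat.card_eq_fintype_card, card_ne_zero_sub]

lemma card_r1 {p : ℕ} [NeZero p] {d : ZMod p} (hd : d ≠ 0) :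
    Nat.card {r : ZMod p // r ≠ 0 ∧ r + d ≠ 0} = p - 2 := by
  rw [Nat.card_eq_fintype_card, Fintype.card_subtype]
  have h : Finset.univ.filter (fun r : ZMod p => r ≠ 0 ∧ r + d ≠ 0)
      = Finset.univ \ {0, -d} := by
    ext r
    simp [add_eq_zero_iff_eq_neg, not_or]
  rw [h, Finset.card_sdiff_of_subset (Finset.subset_univ _), Finset.card_univ, ZMod.card]
  have h2 : ({0, -d} : Finset (ZMod p)).card = 2 := by
    rw [Finset.card_insert_of_notMem, Finset.card_singleton]
    simp only [Finset.mem_singleton]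
    intro h0
    exact hd (by linear_combination h0)
  rw [h2]

lemma card_main {p : ℕ} [NeZero p] (d : ZMod p) (c : ZMod p) :
    Nat.card {a : Wr p | a.1 ≠ 0 ∧ a.1 + d ≠ 0 ∧ ∑ w, a.2 w = c}
      = Nat.card {r : ZMod p // r ≠ 0 ∧ r + d ≠ 0} * p ^ (p - 1) := by
  have e3 : {a : Wr p | a.1 ≠ 0 ∧ a.1 + d ≠ 0 ∧ ∑ w, a.2 w = c}
      ≃ {r : ZMod p // r ≠ 0 ∧ r + d ≠ 0} × {x : ZMod p → ZMod p // ∑ i, x i = c} :=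
    { toFun := fun a => (⟨a.1.1, a.2.1, a.2.2.1⟩, ⟨a.1.2, a.2.2.2⟩)
      invFun := fun rx => ⟨⟨rx.1.1, rx.2.1⟩, rx.1.2.1, rx.1.2.2, rx.2.2⟩
      left_inv := fun a => rfl
      right_inv := fun rx => rfl }
  rw [Nat.card_congr e3, Nat.card_prod, card_fiber]

theorem stmt_15 (p : ℕ) (hp : p.Prime) [NeZero p]
    (u : Wr p) (d : ZMod p) (t : ZMod p → ZMod p) (hu : u⁻¹ = ((d, t) : Wr p))
    (c : ZMod p) (hc : c ≠ 0) :
    ((∑ x : ZMod p, t x) ≠ 0 →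
      {a : Wr p | (a * u⁻¹) ^ p = a ^ p ∧ a ^ p = ((0, fun _ => c) : Wr p)} = ∅) ∧
    ((∑ x : ZMod p, t x) = 0 →
      (d = 0 →
        Nat.card {a : Wr p | (a * u⁻¹) ^ p = a ^ p ∧ a ^ p = ((0, fun _ => c) : Wr p)}
          = (p - 1) * p ^ (p - 1)) ∧
      (d ≠ 0 →
        Nat.card {a : Wr p | (a * u⁻¹) ^ p = a ^ p ∧ a ^ p = ((0, fun _ => c) : Wr p)}
          = (p - 2) * p ^ (p - 1))) := by
  have h1 : (u⁻¹).1 = d := by rw [hu]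
  have h2 : ∀ x, (u⁻¹).2 x = t x := by rw [hu]; intro x; rfl
  constructor
  · intro ht
    rw [Set.eq_empty_iff_forall_notMem]
    intro a ha
    exact wr_not_mem hp hc a u⁻¹
      (by rw [Finset.sum_congr rfl fun x _ => h2 x]; exact ht) ha
  · intro ht
    have hset : {a : Wr p | (a * u⁻¹) ^ p = a ^ p ∧ a ^ p = ((0, fun _ => c) : Wr p)}
        = {a : Wr p | a.1 ≠ 0 ∧ a.1 + d ≠ 0 ∧ ∑ w, a.2 w = c} := by
      ext a
      rw [Set.mem_setOf_eq, Set.mem_setOf_eq,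
        wr_mem_iff hp hc a u⁻¹ (by rw [Finset.sum_congr rfl fun x _ => h2 x]; exact ht), h1]
    refine ⟨fun hd => ?_, fun hd => ?_⟩
    · subst hd
      rw [hset, card_main, card_r0]
    · rw [hset, card_main, card_r1 hd]
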